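/- arXiv:2205.01488 — 3 statements merged into one kernel-verified Lean document; each statement's English description precedes it below -/
import Mathlib

section
/- If 0 ≤ α ≤ 1, β > 1/2, αβ + 1/(2β) ≤ 1 and α < 1/(2β), then for all nonzero real b, -(2αβ - 2β - 1)(2αβ - 1)(2β - 1)b⁴ < 0; consequently |R(ib)| < 1 for all b ≠ 0, where R is the SSPMPRK2 stability function. -/
theorem sspmprk2_modulus_lt_one_on_imaginary_axis
    (α β : ℝ) (hα0 : 0 ≤ α) (hα1 : α ≤ 1) (hβ : 1 / 2 < β)
    (hcond : α * β + 1 / (2 * β) ≤ 1) (hα : α < 1 / (2 * β))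
    (R : ℂ → ℂ)
    (hR : ∀ z : ℂ, R z =
      (-2 + (2 * α * β ^ 2 - 2 * α * β + 1) * z ^ 2 - 2 * β * (α - 1) * z) /
        (2 * (1 + ((α : ℂ) * β - 1) * z) * (β * z - 1))) :
    ∀ b : ℝ, b ≠ 0 →
      -(2 * α * β - 2 * β - 1) * (2 * α * β - 1) * (2 * β - 1) * b ^ 4 < 0 ∧
      ‖R (Complex.I * b)‖ < 1 := by
  intro b hb
  have hβ0 : 0 < β := by linarith
  have hαβ : 2 * α * β < 1 := by
    have h := (lt_div_iff₀ (by positivity : (0:ℝ) < 2 * β)).mp hα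
    nlinarith [h]
  have hb2 : 0 < b ^ 2 := by positivity
  have hb4 : 0 < b ^ 4 := by positivity
  have hK : 0 < (2 * α * β - 2 * β - 1) * (2 * α * β - 1) * (2 * β - 1) := by
    have h1 : 2 * α * β - 2 * β - 1 < 0 := by nlinarith
    have h2 : 2 * α * β - 1 < 0 := by linarith
    have h3 : 0 < 2 * β - 1 := by linarith
    nlinarith [mul_pos_of_neg_of_neg h1 h2]
  have hfirst : -(2 * α * β - 2 * β - 1) * (2 * α * β - 1) * (2 * β - 1) * b ^ 4 < 0 := by
    nlinarith [mul_pos hK hb4]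
  refine ⟨hfirst, ?_⟩
  rw [hR]
  set reN : ℝ := -2 - (2 * α * β ^ 2 - 2 * α * β + 1) * b ^ 2 with hreN
  set imN : ℝ := -2 * β * (α - 1) * b with himN
  set reD : ℝ := -2 * (1 + (α * β - 1) * β * b ^ 2) with hreD
  set imD : ℝ := 2 * b * (β - (α * β - 1)) with himD
  have hN : -2 + ((2:ℂ) * α * β ^ 2 - 2 * α * β + 1) * (Complex.I * b) ^ 2 -
      2 * β * (α - 1) * (Complex.I * b) = (reN : ℂ) + (imN : ℂ) * Complex.I := by
    rw [hreN, himN]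
    push_cast
    ring_nf
    rw [Complex.I_sq]
    ring
  have hD : (2:ℂ) * (1 + ((α : ℂ) * β - 1) * (Complex.I * b)) * (β * (Complex.I * b) - 1) =
      (reD : ℂ) + (imD : ℂ) * Complex.I := by
    rw [hreD, himD]
    push_cast
    ring_nf
    rw [Complex.I_sq]
    ring
  rw [hN, hD, norm_div]
  have hImD : imD ≠ 0 := by
    rw [himD]
    have : 0 < β - (α * β - 1) := by nlinarith
    intro h
    apply hb
    nlinarith [this, sq_nonneg b]
  have hDne : (reD : ℂ) + (imD : ℂ) * Complex.I ≠ 0 := by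
    intro h
    have := congrArg Complex.im h
    simp [Complex.add_im, Complex.mul_im] at this
    exact hImD this
  have hDpos : 0 < ‖(reD : ℂ) + (imD : ℂ) * Complex.I‖ :=
    (norm_pos_iff.mpr hDne)
  rw [div_lt_one hDpos]
  have hnsq : Complex.normSq ((reN : ℂ) + (imN : ℂ) * Complex.I) <
      Complex.normSq ((reD : ℂ) + (imD : ℂ) * Complex.I) := by
    rw [Complex.normSq_add_mul_I, Complex.normSq_add_mul_I]
    have hdiff : reD ^ 2 + imD ^ 2 - (reN ^ 2 + imN ^ 2) =
        (2 * α * β - 2 * β - 1) * (2 * α * β - 1) * (2 * β - 1) * b ^ 4 := by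
      rw [hreN, himN, hreD, himD]; ring
    nlinarith [mul_pos hK hb4]
  calc ‖(reN : ℂ) + (imN : ℂ) * Complex.I‖
      = Real.sqrt (Complex.normSq ((reN : ℂ) + (imN : ℂ) * Complex.I)) := by
        rw [Complex.norm_def]
    _ < Real.sqrt (Complex.normSq ((reD : ℂ) + (imD : ℂ) * Complex.I)) := by
        exact Real.sqrt_lt_sqrt (Complex.normSq_nonneg _) hnsq
    _ = ‖(reD : ℂ) + (imD : ℂ) * Complex.I‖ := by
        rw [Complex.norm_def]
end

section
/- If α = 1/(2β) (with β ≥ 1/2, 0 ≤ α ≤ 1) or (α,β) = (0, 1/2), then |R(ib)| = 1 for all real b, where R is the SSPMPRK2 stability function. -/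
theorem sspmprk2_modulus_eq_one_on_imaginary_axis
    (α β : ℝ) (hα0 : 0 ≤ α) (hα1 : α ≤ 1) (hβ : 0 < β)
    (hcond : α * β + 1 / (2 * β) ≤ 1)
    (hcase : (α = 1 / (2 * β) ∧ 1 / 2 ≤ β) ∨ (α = 0 ∧ β = 1 / 2))
    (R : ℂ → ℂ)
    (hR : ∀ z : ℂ, R z =
      (-2 + (2 * α * β ^ 2 - 2 * α * β + 1) * z ^ 2 - 2 * β * (α - 1) * z) /
        (2 * (1 + ((α : ℂ) * β - 1) * z) * (β * z - 1))) :
    ∀ b : ℝ, ‖R (Complex.I * b)‖ = 1 := by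
  have hβ' : β ≠ 0 := ne_of_gt hβ
  have key : (2 * α * β - 1) * (2 * β - 1) = 0 := by
    rcases hcase with ⟨h1, _⟩ | ⟨h1, h2⟩
    · have : 2 * α * β - 1 = 0 := by rw [h1]; field_simp; ring
      rw [this, zero_mul]
    · rw [h1, h2]; ring
  intro b
  rw [hR]
  set num : ℂ := -2 + (2 * α * β ^ 2 - 2 * α * β + 1) * (Complex.I * b) ^ 2 -
      2 * β * (α - 1) * (Complex.I * b) with hnum
  set den : ℂ := 2 * (1 + ((α : ℂ) * β - 1) * (Complex.I * b)) * (β * (Complex.I * b) - 1)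
      with hden
  have hd1 : (1 + ((α : ℂ) * β - 1) * (Complex.I * b)) ≠ 0 := by
    intro h
    have := congrArg Complex.re h
    simp [Complex.add_re, Complex.mul_re, Complex.mul_im] at this
  have hd2 : ((β : ℂ) * (Complex.I * b) - 1) ≠ 0 := by
    intro h
    have := congrArg Complex.re h
    simp [Complex.sub_re, Complex.mul_re, Complex.mul_im] at this
  have hdne : den ≠ 0 := by
    rw [hden]
    exact mul_ne_zero (mul_ne_zero two_ne_zero hd1) hd2
  have hns : Complex.normSq num = Complex.normSq den := by
    simp only [hnum, hden, Complex.normSq_apply, Complex.add_re, Complex.add_im,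
      Complex.sub_re, Complex.sub_im, Complex.mul_re, Complex.mul_im, Complex.one_re,
      Complex.one_im, Complex.I_re, Complex.I_im, Complex.ofReal_re, Complex.ofReal_im,
      Complex.neg_re, Complex.neg_im, Complex.re_ofNat, Complex.im_ofNat, pow_two]
    linear_combination (-(2 * α * β - 2 * β - 1) * b ^ 4) * key
  have habs : ‖num‖ = ‖den‖ := by
    have h1 := Complex.sq_norm num
    have h2 := Complex.sq_norm den
    nlinarith [norm_nonneg num, norm_nonneg den, hns]
  rw [norm_div, habs, div_self]
  exact norm_ne_zero_iff.mpr hdne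
end

section
/- Let g : ℝ^N → ℝ^N be defined by g(y) = M(y)⁻¹·c(y) where the matrices/vectors arise from the SSPMPRK2 scheme for the linear test problem, specifically y⁽¹⁾(y) = (I - βΔtA)⁻¹y and y^{n+1} determined by (I - ΔtA·D(y))y^{n+1} = (1-α)y + αy⁽¹⁾(y) with D(y) = diag(β₂₀y + β₂₁y⁽¹⁾(y))·diag(y⁽¹⁾(y))^{-s}·diag(y)^{s-1}. Then the Jacobian of g at a positive steady state y* (A y* = 0) is Dg(y*) = (I - (1-αβ)ΔtA)⁻¹[(1-α)I + ΔtA((s-1)(1-αβ) + β₂₀) + (αI + ΔtA(-s(1-αβ) + β₂₁))(I - βΔtA)⁻¹]. -/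
open Matrix

attribute [local instance] Matrix.linftyOpNormedAddCommGroup Matrix.linftyOpNormedRing
  Matrix.linftyOpNormedAlgebra

/-- `mulVec` as a linear map in the matrix argument. -/
noncomputable def mvL (N : ℕ) :
    Matrix (Fin N) (Fin N) ℝ →ₗ[ℝ] ((Fin N → ℝ) →L[ℝ] (Fin N → ℝ)) where
  toFun M := LinearMap.toContinuousLinearMap M.mulVecLin
  map_add' M M' := by ext v; simp [Matrix.add_mulVec]
  map_smul' c M := by ext v; simp [Matrix.smul_mulVec]

noncomputable def mvCLM (N : ℕ) :
    Matrix (Fin N) (Fin N) ℝ →L[ℝ] ((Fin N → ℝ) →L[ℝ] (Fin N → ℝ)) :=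
  LinearMap.toContinuousLinearMap (mvL N)

@[simp] lemma mvCLM_apply {N : ℕ} (M : Matrix (Fin N) (Fin N) ℝ) (v : Fin N → ℝ) :
    mvCLM N M v = M *ᵥ v := rfl

noncomputable def diagCLM (N : ℕ) : (Fin N → ℝ) →L[ℝ] Matrix (Fin N) (Fin N) ℝ :=
  LinearMap.toContinuousLinearMap
    { toFun := fun v => Matrix.diagonal v
      map_add' := fun a b => (Matrix.diagonal_add a b).symm
      map_smul' := fun c a => Matrix.diagonal_smul c a }

@[simp] lemma diagCLM_apply {N : ℕ} (v : Fin N → ℝ) : diagCLM N v = diagonal v := rfl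

lemma unit_det_one_sub_smul {N : ℕ} (A : Matrix (Fin N) (Fin N) ℝ)
    (hspec : ∀ μ ∈ spectrum ℂ (A.map (Complex.ofReal)), μ.re ≤ 0)
    {c : ℝ} (hc : 0 < c) : IsUnit (1 - c • A).det := by
  rw [isUnit_iff_ne_zero]
  intro h0
  have hc0 : (c : ℂ) ≠ 0 := by exact_mod_cast hc.ne'
  have hmap : ((1 - c • A).map Complex.ofReal)
      = 1 - (c : ℂ) • (A.map Complex.ofReal) := by
    ext i j
    by_cases h : i = j <;>
      simp [Matrix.map_apply, Matrix.one_apply, h]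
  have hdet : (1 - (c : ℂ) • A.map Complex.ofReal).det = 0 := by
    rw [← hmap]
    calc ((1 - c • A).map Complex.ofReal).det
        = Complex.ofRealHom ((1 - c • A).det) := (RingHom.map_det Complex.ofRealHom _).symm
      _ = 0 := by rw [h0]; simp
  have hmem : ((c : ℂ))⁻¹ ∈ spectrum ℂ (A.map Complex.ofReal) := by
    rw [spectrum.mem_iff]
    intro hunit
    rw [Matrix.isUnit_iff_isUnit_det, isUnit_iff_ne_zero] at hunit
    apply hunit
    have key : (1 : Matrix (Fin N) (Fin N) ℂ) - (c : ℂ) • A.map Complex.ofReal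
        = (c : ℂ) • (algebraMap ℂ (Matrix (Fin N) (Fin N) ℂ) ((c : ℂ))⁻¹
            - A.map Complex.ofReal) := by
      rw [Algebra.algebraMap_eq_smul_one, smul_sub, smul_smul, mul_inv_cancel₀ hc0, one_smul]
    rw [key, Matrix.det_smul] at hdet
    rcases mul_eq_zero.1 hdet with h | h
    · exact absurd h (pow_ne_zero _ hc0)
    · exact h
  have := hspec _ hmem
  rw [← Complex.ofReal_inv, Complex.ofReal_re] at this
  exact absurd this (not_le.2 (by positivity))

theorem sspmprk2_jacobian_at_steady_state
    (N : ℕ) (A : Matrix (Fin N) (Fin N) ℝ)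
    (hspec : ∀ μ ∈ spectrum ℂ (A.map (Complex.ofReal)), μ.re ≤ 0)
    (hones : (fun _ : Fin N => (1 : ℝ)) ᵥ* A = 0)
    (Δt α β : ℝ) (hΔt : 0 < Δt)
    (hα0 : 0 ≤ α) (hα1 : α ≤ 1) (hβ : 0 < β) (hcond : α * β + 1 / (2 * β) ≤ 1)
    (β20 β21 s : ℝ)
    (hβ20 : β20 = 1 - 1 / (2 * β) - α * β) (hβ21 : β21 = 1 / (2 * β))
    (hs : s = (1 - α * β + α * β ^ 2) / (β * (1 - α * β)))
    (y1 : (Fin N → ℝ) → (Fin N → ℝ))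
    (hy1 : ∀ y, y1 y = (1 - (β * Δt) • A)⁻¹ *ᵥ y)
    (D : (Fin N → ℝ) → Matrix (Fin N) (Fin N) ℝ)
    (hD : ∀ y, D y = diagonal (β20 • y + β21 • y1 y) *
        diagonal (fun i => (y1 y i) ^ (-s)) * diagonal (fun i => (y i) ^ (s - 1)))
    (g : (Fin N → ℝ) → (Fin N → ℝ))
    (hg : ∀ y, g y = (1 - Δt • (A * D y))⁻¹ *ᵥ ((1 - α) • y + α • y1 y))
    (ystar : Fin N → ℝ) (hpos : ∀ i, 0 < ystar i) (hker : A *ᵥ ystar = 0) :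
    (fderiv ℝ g ystar).toLinearMap =
      ((1 - ((1 - α * β) * Δt) • A)⁻¹ *
        ((1 - α) • (1 : Matrix (Fin N) (Fin N) ℝ) +
          ((s - 1) * (1 - α * β) + β20) • (Δt • A) +
          (α • (1 : Matrix (Fin N) (Fin N) ℝ) +
            (-s * (1 - α * β) + β21) • (Δt • A)) *
            (1 - (β * Δt) • A)⁻¹)).mulVecLin := by
  classical
  have hβΔt : 0 < β * Δt := by positivity
  have h2β : 0 < 1 / (2 * β) := by positivity
  have hαβ : 0 < 1 - α * β := by linarith
  have hCc : 0 < (1 - α * β) * Δt := by positivity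
  set B : Matrix (Fin N) (Fin N) ℝ := 1 - (β * Δt) • A with hBdef
  set C : Matrix (Fin N) (Fin N) ℝ := 1 - ((1 - α * β) * Δt) • A with hCdef
  have hBdet : IsUnit B.det := unit_det_one_sub_smul A hspec hβΔt
  have hCdet : IsUnit C.det := unit_det_one_sub_smul A hspec hCc
  have hBu : B⁻¹ * B = 1 := Matrix.nonsing_inv_mul _ hBdet
  have hCu : C⁻¹ * C = 1 := Matrix.nonsing_inv_mul _ hCdet
  have hBstar : B *ᵥ ystar = ystar := by
    rw [hBdef, Matrix.sub_mulVec, Matrix.one_mulVec, Matrix.smul_mulVec, hker,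
      smul_zero, sub_zero]
  have hCstar : C *ᵥ ystar = ystar := by
    rw [hCdef, Matrix.sub_mulVec, Matrix.one_mulVec, Matrix.smul_mulVec, hker,
      smul_zero, sub_zero]
  have hBinv : B⁻¹ *ᵥ ystar = ystar := by
    conv_lhs => rw [← hBstar]
    rw [Matrix.mulVec_mulVec, hBu, Matrix.one_mulVec]
  have hCinv : C⁻¹ *ᵥ ystar = ystar := by
    conv_lhs => rw [← hCstar]
    rw [Matrix.mulVec_mulVec, hCu, Matrix.one_mulVec]
  have hsum : β20 + β21 = 1 - α * β := by rw [hβ20, hβ21]; ring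
  set d : (Fin N → ℝ) → (Fin N → ℝ) := fun y i =>
    (β20 * y i + β21 * (B⁻¹ *ᵥ y) i) * ((B⁻¹ *ᵥ y) i) ^ (-s) * (y i) ^ (s - 1) with hd_def
  have hDd : ∀ y, D y = diagonal (d y) := by
    intro y
    rw [hD, hy1, Matrix.diagonal_mul_diagonal, Matrix.diagonal_mul_diagonal]
    congr 1
  set K : Matrix (Fin N) (Fin N) ℝ :=
    ((s - 1) * (1 - α * β) + β20) • (1 : Matrix (Fin N) (Fin N) ℝ)
      + (-s * (1 - α * β) + β21) • B⁻¹ with hK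
  set Dmat : Matrix (Fin N) (Fin N) ℝ := diagonal (fun i => (ystar i)⁻¹) * K with hDmat
  -- derivative of d
  have hder_d : HasFDerivAt d (mvCLM N Dmat) ystar := by
    apply hasFDerivAt_pi''
    intro i
    have hp : 0 < ystar i := hpos i
    have hne : (B⁻¹ *ᵥ ystar) i ≠ 0 := by rw [hBinv]; exact hp.ne'
    have h0' := (ContinuousLinearMap.proj (R := ℝ) (φ := fun _ : Fin N => ℝ) i).hasFDerivAt
      (x := ystar)
    have h0 : HasFDerivAt (fun y : Fin N → ℝ => y i)
        (ContinuousLinearMap.proj (R := ℝ) (φ := fun _ : Fin N => ℝ) i) ystar := h0'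
    have hu' := ((ContinuousLinearMap.proj (R := ℝ) (φ := fun _ : Fin N => ℝ) i).comp
      (mvCLM N B⁻¹)).hasFDerivAt (x := ystar)
    have hu : HasFDerivAt (fun y : Fin N → ℝ => (B⁻¹ *ᵥ y) i)
        ((ContinuousLinearMap.proj (R := ℝ) (φ := fun _ : Fin N => ℝ) i).comp (mvCLM N B⁻¹))
        ystar := hu'
    have ha := (h0.const_mul β20).add (hu.const_mul β21)
    have hb := (Real.hasDerivAt_rpow_const (p := -s) (Or.inl hne)).comp_hasFDerivAt ystar hu
    have hc := (Real.hasDerivAt_rpow_const (p := s - 1) (Or.inl hp.ne')).comp_hasFDerivAt ystar h0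
    have hprod := (ha.mul hb).mul hc
    refine hprod.congr_fderiv ?_
    ext h
    have hq : ystar i ^ s ≠ 0 := (Real.rpow_pos_of_pos hp s).ne'
    have e1 : ystar i ^ (-s) = (ystar i ^ s)⁻¹ := Real.rpow_neg hp.le s
    have e2 : ystar i ^ (s - 1) = ystar i ^ s / ystar i := by
      rw [Real.rpow_sub hp, Real.rpow_one]
    have e3 : ystar i ^ (s - 1 - 1) = ystar i ^ s / ystar i / ystar i := by
      rw [Real.rpow_sub hp, Real.rpow_sub hp, Real.rpow_one]
    have e4 : ystar i ^ (-s - 1) = (ystar i ^ s)⁻¹ / ystar i := by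
      rw [Real.rpow_sub hp, Real.rpow_one, Real.rpow_neg hp.le]
    simp only [ContinuousLinearMap.coe_comp', Function.comp_apply,
      ContinuousLinearMap.proj_apply, mvCLM_apply, ContinuousLinearMap.add_apply,
      ContinuousLinearMap.coe_smul', Pi.smul_apply, ContinuousLinearMap.smul_apply,
      smul_eq_mul, Pi.mul_apply, Pi.add_apply, hBinv, hDmat, hK]
    rw [← Matrix.mulVec_mulVec, Matrix.mulVec_diagonal]
    rw [Matrix.add_mulVec, Matrix.smul_mulVec, Matrix.smul_mulVec,
      Matrix.one_mulVec]
    simp only [Pi.add_apply, Pi.smul_apply, smul_eq_mul]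
    rw [e1, e2, e3, e4]
    rw [show β20 = 1 - α * β - β21 by rw [hβ20, hβ21]; ring]
    field_simp
    ring
  -- value of D at ystar
  have hDstar : diagonal (d ystar) = (1 - α * β) • (1 : Matrix (Fin N) (Fin N) ℝ) := by
    have hdy : d ystar = fun _ => 1 - α * β := by
      funext i
      have hp := hpos i
      have hq : ystar i ^ s ≠ 0 := (Real.rpow_pos_of_pos hp s).ne'
      simp only [hd_def, hBinv]
      rw [Real.rpow_neg hp.le, Real.rpow_sub hp, Real.rpow_one]
      rw [show β20 = 1 - α * β - β21 by rw [hβ20, hβ21]; ring]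
      field_simp
      ring
    rw [hdy, Matrix.smul_one_eq_diagonal]
  have hMystar : (1 : Matrix (Fin N) (Fin N) ℝ) - Δt • (A * diagonal (d ystar)) = C := by
    rw [hDstar, mul_smul_comm, mul_one, smul_smul, hCdef, mul_comm Δt (1 - α * β)]
  -- derivative of the matrix function
  have hM := ((((((diagCLM N).hasFDerivAt).comp ystar hder_d).const_mul A).const_smul Δt)).const_sub
    (1 : Matrix (Fin N) (Fin N) ℝ)
  -- derivative of inversion
  have hCunit : IsUnit C := C.isUnit_iff_isUnit_det.2 hCdet
  have hcoe : (↑hCunit.unit⁻¹ : Matrix (Fin N) (Fin N) ℝ) = C⁻¹ := by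
    rw [Matrix.coe_units_inv, IsUnit.unit_spec]
  have hinv0 : HasFDerivAt (Ring.inverse : Matrix (Fin N) (Fin N) ℝ → _)
      (-ContinuousLinearMap.mulLeftRight ℝ _ C⁻¹ C⁻¹)
      ((1 : Matrix (Fin N) (Fin N) ℝ) - Δt • (A * diagonal (d ystar))) := by
    rw [hMystar]
    have := hasFDerivAt_ringInverse (𝕜 := ℝ) hCunit.unit
    rwa [hcoe, IsUnit.unit_spec] at this
  have hMC := hinv0.comp ystar hM
  -- derivative of the affine part
  have hv := ((hasFDerivAt_id ystar).const_smul (1 - α)).add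
    (((mvCLM N B⁻¹).hasFDerivAt (x := ystar)).const_smul α)
  -- bilinear mulVec
  have hbil : IsBoundedBilinearMap ℝ
      (fun p : Matrix (Fin N) (Fin N) ℝ × (Fin N → ℝ) => p.1 *ᵥ p.2) :=
    (mvCLM N).isBoundedBilinearMap
  have hgchain := (hbil.hasFDerivAt _).comp ystar (hMC.prodMk hv)
  have hgfun : g = (fun p : Matrix (Fin N) (Fin N) ℝ × (Fin N → ℝ) => p.1 *ᵥ p.2) ∘
      (fun y => (Ring.inverse ((1 : Matrix (Fin N) (Fin N) ℝ) - Δt • (A * diagonal (d y))),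
        (1 - α) • y + α • (B⁻¹ *ᵥ y))) := by
    funext y
    simp only [Function.comp_apply]
    rw [hg, hDd, hy1, Matrix.nonsing_inv_eq_ringInverse]
  have hfd : HasFDerivAt g (LinearMap.toContinuousLinearMap
      ((C⁻¹ *
        ((1 - α) • (1 : Matrix (Fin N) (Fin N) ℝ) +
          ((s - 1) * (1 - α * β) + β20) • (Δt • A) +
          (α • (1 : Matrix (Fin N) (Fin N) ℝ) +
            (-s * (1 - α * β) + β21) • (Δt • A)) *
            B⁻¹)).mulVecLin)) ystar := by
    rw [hgfun]
    refine hgchain.congr_fderiv (Eq.symm ?_)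
    refine ContinuousLinearMap.ext fun h => ?_
    simp only [ContinuousLinearMap.coe_comp', Function.comp_apply,
      ContinuousLinearMap.prod_apply, IsBoundedBilinearMap.deriv_apply,
      LinearMap.coe_toContinuousLinearMap', Matrix.mulVecLin_apply,
      ContinuousLinearMap.neg_apply, ContinuousLinearMap.mulLeftRight_apply,
      ContinuousLinearMap.sub_apply, ContinuousLinearMap.zero_apply,
      ContinuousLinearMap.smul_apply, ContinuousLinearMap.add_apply,
      ContinuousLinearMap.coe_smul', Pi.smul_apply, ContinuousLinearMap.coe_id', id_eq,
      mvCLM_apply, diagCLM_apply, hMystar, ← Matrix.nonsing_inv_eq_ringInverse, hBinv,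
      Pi.add_apply]
    erw [ContinuousLinearMap.comp_apply, diagCLM_apply, mvCLM_apply]
    have hvstar : (1 - α) • ystar + α • ystar = ystar := by module
    have hdiagK : Matrix.diagonal (Dmat *ᵥ h) *ᵥ ystar = K *ᵥ h := by
      funext j
      rw [Matrix.mulVec_diagonal, hDmat, ← Matrix.mulVec_mulVec, Matrix.mulVec_diagonal]
      rw [mul_comm ((ystar j)⁻¹) _, mul_assoc, inv_mul_cancel₀ (hpos j).ne', mul_one]
    rw [hvstar]
    simp only [zero_sub, mul_neg, neg_mul, neg_neg, smul_eq_mul, ← Matrix.mulVec_mulVec,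
      Matrix.smul_mulVec, hCinv, hdiagK, hK, Matrix.add_mulVec, Matrix.one_mulVec,
      Matrix.mulVec_add, Matrix.mulVec_smul]
    module
  rw [hfd.fderiv]
  exact congrArg _ rfl
end
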